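/- With the same setup as for the gradient (h_{i,t} = Σ_{j,δ} w_{i,j,δ} a_{j,t+δ} + b_i, f a twice-differentiable function of the outputs {h_t}), the Hessian of f with respect to vec(W) satisfies ∂²f/∂vec(W)² = Σ_{t,t'∈𝒯} A_{t,t'} ⊗ G_{t,t'}, where A_{t,t'} = a_t a_{t'}ᵀ ∈ ℝ^{(J|Δ|+1)×(J|Δ|+1)} and G_{t,t'} = ∂²f/(∂h_t ∂h_{t'}) ∈ ℝ^{I×I}. -/

import Mathlib

private lemma quad_sum_swap {α β : Type*} [Fintype α] [Fintype β] (g : α → β → α → β → ℝ) :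
    ∑ i : α, ∑ t : β, ∑ i' : α, ∑ t' : β, g i t i' t'
      = ∑ t : β, ∑ t' : β, ∑ i : α, ∑ i' : α, g i t i' t' := by
  rw [Finset.sum_comm]
  refine Finset.sum_congr rfl fun t _ => ?_
  calc ∑ i : α, ∑ i' : α, ∑ t' : β, g i t i' t'
      = ∑ i : α, ∑ t' : β, ∑ i' : α, g i t i' t' :=
        Finset.sum_congr rfl fun i _ => Finset.sum_comm
    _ = ∑ t' : β, ∑ i : α, ∑ i' : α, g i t i' t' := Finset.sum_comm

/-- Theorem 1(ii): for a convolutional layer h_{i,t} = Σ_{j,δ} w_{i,j,δ} a_{j,t+δ} + b_i,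
the Hessian of the loss w.r.t. vec(W) is Σ_{t,t'} A_{t,t'} ⊗ G_{t,t'} with
A_{t,t'} = a_t a_{t'}ᵀ and G_{t,t'} = ∂²f/(∂h_t ∂h_{t'}), stated here as a
bilinear form: d²F(W)[V,V'] = Σ_{t,t'} Σ_{i,i'} (G_{t,t'})_{i,i'} (a_tᵀV_i)(a_{t'}ᵀV'_{i'}). -/
theorem conv_layer_hessian_structure
    {T S Δ : Type*} [Fintype T] [Fintype Δ] [DecidableEq T]
    {I J : ℕ} (shift : T → Δ → S) (a : Fin J → S → ℝ)
    (aVec : T → (Fin J × Δ ⊕ Unit) → ℝ)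
    (haVec : aVec = fun t => Sum.elim (fun jδ => a jδ.1 (shift t jδ.2)) (fun _ => (1 : ℝ)))
    (f : (Fin I × T → ℝ) → ℝ) (hf : ContDiff ℝ 2 f)
    (F : (Fin I → (Fin J × Δ ⊕ Unit) → ℝ) → ℝ)
    (hF : F = fun W => f (fun q => ∑ p, W q.1 p * aVec q.2 p))
    (W : Fin I → (Fin J × Δ ⊕ Unit) → ℝ) :
    ∀ V V' : Fin I → (Fin J × Δ ⊕ Unit) → ℝ,
      fderiv ℝ (fun W' => fderiv ℝ F W' V) W V'
        = ∑ t : T, ∑ t' : T, ∑ i : Fin I, ∑ i' : Fin I,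
            (fderiv ℝ (fun z => fderiv ℝ f z (Pi.single (i, t) (1 : ℝ)))
                (fun q => ∑ p, W q.1 p * aVec q.2 p) (Pi.single (i', t') (1 : ℝ)))
            * (∑ p, V i p * aVec t p) * (∑ p, V' i' p * aVec t' p) := by
  classical
  intro V V'
  have hfd : Differentiable ℝ f := hf.differentiable (by norm_num)
  have hdf : Differentiable ℝ (fderiv ℝ f) :=
    (hf.fderiv_right (by norm_num : (1 : WithTop ℕ∞) + 1 ≤ 2)).differentiable one_ne_zero
  -- key: second derivative applied in a fixed direction
  have key : ∀ (x u v : Fin I × T → ℝ),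
      fderiv ℝ (fun z => fderiv ℝ f z u) x v = (fderiv ℝ (fderiv ℝ f) x v) u := by
    intro x u v
    have h : (fun z => fderiv ℝ f z u) = fun z => (fderiv ℝ f z) ((fun _ => u) z) := rfl
    rw [h, fderiv_clm_apply (hdf x) (differentiableAt_const u)]
    simp
  -- the linear layer map
  let L : (Fin I → (Fin J × Δ ⊕ Unit) → ℝ) →ₗ[ℝ] (Fin I × T → ℝ) :=
    { toFun := fun W => fun q => ∑ p, W q.1 p * aVec q.2 p,
      map_add' := by
        intro x y; funext q; simp [add_mul, Finset.sum_add_distrib]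
      map_smul' := by
        intro c x; funext q; simp [Finset.mul_sum, mul_assoc, mul_add] }
  let Lc : (Fin I → (Fin J × Δ ⊕ Unit) → ℝ) →L[ℝ] (Fin I × T → ℝ) :=
    LinearMap.toContinuousLinearMap L
  have hFc : F = fun w => f (Lc w) := hF
  have hdF : ∀ w, fderiv ℝ F w = (fderiv ℝ f (Lc w)).comp Lc := by
    intro w
    rw [hFc]
    have h := fderiv_comp w (hfd (Lc w)) Lc.differentiableAt
    rw [Lc.fderiv] at h
    exact h
  have hdFV : (fun w => fderiv ℝ F w V) = fun w => fderiv ℝ f (Lc w) (Lc V) := by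
    funext w; rw [hdF]; rfl
  set x := Lc W with hx
  have hmain : fderiv ℝ (fun w => fderiv ℝ F w V) W V'
      = (fderiv ℝ (fderiv ℝ f) x (Lc V')) (Lc V) := by
    rw [hdFV]
    have hcomp : (fun w => fderiv ℝ f (Lc w) (Lc V))
        = fun w => ((fun z => fderiv ℝ f z (Lc V)) ∘ Lc) w := rfl
    rw [hcomp]
    have hdiff : DifferentiableAt ℝ (fun z => fderiv ℝ f z (Lc V)) (Lc W) :=
      (hdf.clm_apply (differentiable_const (Lc V))) (Lc W)
    have h2 := fderiv_comp W hdiff Lc.differentiableAt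
    rw [Lc.fderiv] at h2
    rw [h2]
    simp only [ContinuousLinearMap.coe_comp', Function.comp_apply]
    rw [key x (Lc V) (Lc V')]
  rw [hmain]
  have hexp : ∀ v : Fin I × T → ℝ,
      v = ∑ q : Fin I × T, v q • (Pi.single q (1 : ℝ) : Fin I × T → ℝ) := by
    intro v
    funext r
    rw [Finset.sum_apply, Finset.sum_eq_single r]
    · simp
    · intro q _ hq; simp [Pi.single_apply, hq.symm]
    · intro h; exact absurd (Finset.mem_univ r) h
  set B := fderiv ℝ (fderiv ℝ f) x with hB
  calc (B (Lc V')) (Lc V)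
      = (B (∑ q' : Fin I × T, Lc V' q' • (Pi.single q' (1:ℝ) : Fin I × T → ℝ)))
          (∑ q : Fin I × T, Lc V q • (Pi.single q (1:ℝ) : Fin I × T → ℝ)) := by
        rw [← hexp (Lc V), ← hexp (Lc V')]
    _ = ∑ q' : Fin I × T, ∑ q : Fin I × T,
          Lc V' q' * (Lc V q * (B (Pi.single q' (1:ℝ))) (Pi.single q (1:ℝ))) := by
        simp only [map_sum, map_smul, ContinuousLinearMap.sum_apply,
          ContinuousLinearMap.smul_apply, smul_eq_mul, Finset.mul_sum]
        rw [Finset.sum_comm]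
        exact Finset.sum_congr rfl fun q' _ => Finset.sum_congr rfl fun q _ => by ring
    _ = ∑ t : T, ∑ t' : T, ∑ i : Fin I, ∑ i' : Fin I,
          (fderiv ℝ (fun z => fderiv ℝ f z (Pi.single (i, t) (1 : ℝ)))
              (fun q => ∑ p, W q.1 p * aVec q.2 p) (Pi.single (i', t') (1 : ℝ)))
          * (∑ p, V i p * aVec t p) * (∑ p, V' i' p * aVec t' p) := by
        rw [← quad_sum_swap]
        rw [Finset.sum_comm, Fintype.sum_prod_type]
        refine Finset.sum_congr rfl fun i _ => Finset.sum_congr rfl fun t _ => ?_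
        rw [Fintype.sum_prod_type]
        refine Finset.sum_congr rfl fun i' _ => Finset.sum_congr rfl fun t' _ => ?_
        have hk := key x (Pi.single (i,t) (1:ℝ)) (Pi.single (i',t') (1:ℝ))
        have hxeq : (fun q : Fin I × T => ∑ p, W q.1 p * aVec q.2 p) = x := rfl
        rw [hxeq, hk, ← hB]
        have h1 : Lc V (i, t) = ∑ p, V i p * aVec t p := rfl
        have h2 : Lc V' (i', t') = ∑ p, V' i' p * aVec t' p := rfl
        rw [h1, h2]; ring
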